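/- With the definitions below, m_tI > 0, and Σ_{j=1}^{n+1} Δv_sc(j) < Σ_{j=1}^{n+1} Δv_sn(j), the inequality m_sIc ≤ m_sIn holds if and only if m_sF/m_tI ≥ α, where α := [Σ_{j=1}^{n} {(m_req/m_tI)·exp((Σ_{k=1}^{j} Δv_sn(k))/(Isp_s·g0)) − ((1 + m_req/m_tI)·exp(Δv_tout(j)/(Isp_t·g0)) − exp(−Δv_tin(j)/(Isp_t·g0)))·exp((Σ_{k=1}^{j} Δv_sc(k))/(Isp_s·g0))}] / [exp((Σ_{j=1}^{n+1} Δv_sc(j))/(Isp_s·g0)) − exp((Σ_{j=1}^{n+1} Δv_sn(j))/(Isp_s·g0))]. -/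
import Mathlib


/-- When the servicer's total Δv is strictly lower in the cooperative architecture, the
cooperative architecture needs no more initial servicer mass exactly when the
dry-servicer to initial-target mass ratio is at least the critical mass ratio α. -/
theorem stmt_8 (n : ℕ) (hn : 1 ≤ n)
    (g0 Isp_s Isp_t m_sF m_tI m_req : ℝ)
    (hg0 : 0 < g0) (hIsps : 0 < Isp_s) (hIspt : 0 < Isp_t) (htI : 0 < m_tI)
    (Δv_sn Δv_sc Δv_tin Δv_tout : ℕ → ℝ)
    (hlt : (∑ j ∈ Finset.Icc 1 (n + 1), Δv_sc j) <
      (∑ j ∈ Finset.Icc 1 (n + 1), Δv_sn j))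
    (m_sIn m_sIc α : ℝ)
    (hIn : m_sIn = m_sF *
        Real.exp ((∑ j ∈ Finset.Icc 1 (n + 1), Δv_sn j) / (Isp_s * g0)) +
      ∑ j ∈ Finset.Icc 1 n,
        m_req * Real.exp ((∑ k ∈ Finset.Icc 1 j, Δv_sn k) / (Isp_s * g0)))
    (hIc : m_sIc = m_sF *
        Real.exp ((∑ j ∈ Finset.Icc 1 (n + 1), Δv_sc j) / (Isp_s * g0)) +
      ∑ j ∈ Finset.Icc 1 n,
        ((m_tI + m_req) * Real.exp (Δv_tout j / (Isp_t * g0)) -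
          m_tI * Real.exp (-Δv_tin j / (Isp_t * g0))) *
          Real.exp ((∑ k ∈ Finset.Icc 1 j, Δv_sc k) / (Isp_s * g0)))
    (hα : α =
      (∑ j ∈ Finset.Icc 1 n,
        ((m_req / m_tI) *
            Real.exp ((∑ k ∈ Finset.Icc 1 j, Δv_sn k) / (Isp_s * g0)) -
          ((1 + m_req / m_tI) * Real.exp (Δv_tout j / (Isp_t * g0)) -
              Real.exp (-Δv_tin j / (Isp_t * g0))) *
            Real.exp ((∑ k ∈ Finset.Icc 1 j, Δv_sc k) / (Isp_s * g0)))) /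
      (Real.exp ((∑ j ∈ Finset.Icc 1 (n + 1), Δv_sc j) / (Isp_s * g0)) -
        Real.exp ((∑ j ∈ Finset.Icc 1 (n + 1), Δv_sn j) / (Isp_s * g0)))) :
    m_sIc ≤ m_sIn ↔ α ≤ m_sF / m_tI := by
  set Ec := Real.exp ((∑ j ∈ Finset.Icc 1 (n + 1), Δv_sc j) / (Isp_s * g0)) with hEc
  set En := Real.exp ((∑ j ∈ Finset.Icc 1 (n + 1), Δv_sn j) / (Isp_s * g0)) with hEn
  have hIg : 0 < Isp_s * g0 := mul_pos hIsps hg0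
  have hexp : Ec < En := Real.exp_lt_exp.2 (by exact div_lt_div_of_pos_right hlt hIg)
  have hD : Ec - En < 0 := sub_neg.2 hexp
  set Sn := ∑ j ∈ Finset.Icc 1 n,
      m_req * Real.exp ((∑ k ∈ Finset.Icc 1 j, Δv_sn k) / (Isp_s * g0)) with hSn
  set Sc := ∑ j ∈ Finset.Icc 1 n,
      ((m_tI + m_req) * Real.exp (Δv_tout j / (Isp_t * g0)) -
        m_tI * Real.exp (-Δv_tin j / (Isp_t * g0))) *
        Real.exp ((∑ k ∈ Finset.Icc 1 j, Δv_sc k) / (Isp_s * g0)) with hSc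
  set N := ∑ j ∈ Finset.Icc 1 n,
      ((m_req / m_tI) * Real.exp ((∑ k ∈ Finset.Icc 1 j, Δv_sn k) / (Isp_s * g0)) -
        ((1 + m_req / m_tI) * Real.exp (Δv_tout j / (Isp_t * g0)) -
            Real.exp (-Δv_tin j / (Isp_t * g0))) *
          Real.exp ((∑ k ∈ Finset.Icc 1 j, Δv_sc k) / (Isp_s * g0))) with hN
  have hkey : N * m_tI = Sn - Sc := by
    rw [hN, hSn, hSc, Finset.sum_mul, ← Finset.sum_sub_distrib]
    refine Finset.sum_congr rfl fun j _ => ?_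
    field_simp
  have h1 : m_sIc ≤ m_sIn ↔ m_sF * (Ec - En) ≤ Sn - Sc := by
    rw [hIn, hIc]
    constructor <;> intro h <;> nlinarith
  have h2 : α ≤ m_sF / m_tI ↔ m_sF / m_tI * (Ec - En) ≤ N := by
    rw [hα, div_le_iff_of_neg hD]
  rw [h1, h2, div_mul_eq_mul_div, div_le_iff₀ htI, hkey]
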